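/- Every finite 3-regular bipartite simple graph admits a string contact representation in ℝ³ of complexity at most 2, i.e., one in which every string is a B₂-string. -/

import Mathlib

open Set

/-- Points of ℝ³, identified with triples of real numbers. -/
abbrev Pt3 : Type := Fin 3 → ℝ

/-- A vector is parallel to a coordinate axis if at most one of its
three coordinates is nonzero. -/
def AxisParallel (v : Pt3) : Prop := ∃ i : Fin 3, ∀ j : Fin 3, j ≠ i → v j = 0

/-- An axis-aligned string in ℝ³: a simple polygonal path `pts 0, pts 1, …, pts k`
(`k ≥ 1`) with consecutive points distinct, each difference parallel to a coordinate
axis, and the path non-self-intersecting (consecutive segments meet exactly at their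
common endpoint and non-consecutive segments are disjoint). -/
structure AAString where
  k : ℕ
  pts : Fin (k + 1) → Pt3
  k_pos : 1 ≤ k
  consec_ne : ∀ i : Fin k, pts i.castSucc ≠ pts i.succ
  axis : ∀ i : Fin k, AxisParallel (pts i.succ - pts i.castSucc)
  simple_consec : ∀ i j : Fin k, (i : ℕ) + 1 = (j : ℕ) →
    segment ℝ (pts i.castSucc) (pts i.succ) ∩ segment ℝ (pts j.castSucc) (pts j.succ)
      = {pts i.succ}
  simple_far : ∀ i j : Fin k, (i : ℕ) + 1 < (j : ℕ) →
    segment ℝ (pts i.castSucc) (pts i.succ) ∩ segment ℝ (pts j.castSucc) (pts j.succ) = ∅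

/-- The string, as a subset of ℝ³: the union of its closed segments. -/
def AAString.carrier (S : AAString) : Set Pt3 :=
  ⋃ i : Fin S.k, segment ℝ (S.pts i.castSucc) (S.pts i.succ)

/-- The two endpoints of the string. -/
def AAString.endpoints (S : AAString) : Set Pt3 := {S.pts 0, S.pts (Fin.last S.k)}

/-- The number of bends of the string: one less than its number of segments. -/
def AAString.bends (S : AAString) : ℕ := S.k - 1

/-- A string contact representation of a simple graph `G`: two distinct strings meet
only at endpoints of one of them, no point lies on three distinct strings, and two
strings intersect iff the corresponding vertices are adjacent. -/
def IsStringContactRep {V : Type*} (G : SimpleGraph V) (Ψ : V → AAString) : Prop :=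
  (∀ u v : V, u ≠ v → ∀ p ∈ (Ψ u).carrier ∩ (Ψ v).carrier,
      p ∈ (Ψ u).endpoints ∪ (Ψ v).endpoints) ∧
  (∀ u v w : V, u ≠ v → u ≠ w → v ≠ w →
      ∀ p : Pt3, ¬ (p ∈ (Ψ u).carrier ∧ p ∈ (Ψ v).carrier ∧ p ∈ (Ψ w).carrier)) ∧
  (∀ u v : V, u ≠ v → (((Ψ u).carrier ∩ (Ψ v).carrier).Nonempty ↔ G.Adj u v))


-- ## Auxiliary machinery for the construction


lemma Pt3.ext' {x : Pt3} {a b c : ℝ} (h0 : x 0 = a) (h1 : x 1 = b) (h2 : x 2 = c) :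
    x = ![a, b, c] := by
  funext i; fin_cases i <;> simpa

lemma mem_seg_iff {p q : Pt3} {a : Fin 3} (h : ∀ i, i ≠ a → p i = q i) {x : Pt3} :
    x ∈ segment ℝ p q ↔ (∀ i, i ≠ a → x i = p i) ∧ x a ∈ uIcc (p a) (q a) := by
  rw [segment_eq_image]
  constructor
  · rintro ⟨θ, ⟨h0, h1⟩, rfl⟩
    constructor
    · intro i hi
      simp only [Pi.add_apply, Pi.smul_apply, smul_eq_mul, h i hi]
      ring
    · rw [← segment_eq_uIcc, segment_eq_image]
      exact ⟨θ, ⟨h0, h1⟩, rfl⟩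
  · rintro ⟨hfix, hax⟩
    rw [← segment_eq_uIcc, segment_eq_image] at hax
    obtain ⟨θ, hθ, hx⟩ := hax
    refine ⟨θ, hθ, ?_⟩
    funext i
    by_cases hi : i = a
    · subst hi
      simp only [Pi.add_apply, Pi.smul_apply, smul_eq_mul]
      simpa using hx
    · simp only [Pi.add_apply, Pi.smul_apply, smul_eq_mul, ← h i hi, hfix i hi]
      ring

open Set

/-- Constructor for a 3-segment axis-aligned string. -/
def mk3 (p0 p1 p2 p3 : Pt3)
    (h01 : p0 ≠ p1) (h12 : p1 ≠ p2) (h23 : p2 ≠ p3)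
    (a01 : AxisParallel (p1 - p0)) (a12 : AxisParallel (p2 - p1))
    (a23 : AxisParallel (p3 - p2))
    (s01 : segment ℝ p0 p1 ∩ segment ℝ p1 p2 = {p1})
    (s12 : segment ℝ p1 p2 ∩ segment ℝ p2 p3 = {p2})
    (s02 : segment ℝ p0 p1 ∩ segment ℝ p2 p3 = ∅) : AAString where
  k := 3
  pts := ![p0, p1, p2, p3]
  k_pos := by norm_num
  consec_ne := by
    intro i
    fin_cases i
    · exact h01
    · exact h12
    · exact h23
  axis := by
    intro i
    fin_cases i
    · exact a01
    · exact a12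
    · exact a23
  simple_consec := by
    intro i j hij
    fin_cases i <;> fin_cases j <;> simp at hij ⊢ <;>
      first | exact s01 | exact s12 | omega
  simple_far := by
    intro i j hij
    fin_cases i <;> fin_cases j <;> simp at hij ⊢ <;>
      first | exact s02 | omega

lemma mk3_carrier (p0 p1 p2 p3 : Pt3) (h01 h12 h23 a01 a12 a23 s01 s12 s02) :
    (mk3 p0 p1 p2 p3 h01 h12 h23 a01 a12 a23 s01 s12 s02).carrier =
      segment ℝ p0 p1 ∪ segment ℝ p1 p2 ∪ segment ℝ p2 p3 := by
  unfold AAString.carrier mk3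
  ext x
  simp only [mem_iUnion, mem_union]
  constructor
  · rintro ⟨i, hi⟩
    fin_cases i
    · exact Or.inl (Or.inl hi)
    · exact Or.inl (Or.inr hi)
    · exact Or.inr hi
  · rintro ((h | h) | h)
    exacts [⟨0, h⟩, ⟨1, h⟩, ⟨2, h⟩]

lemma mk3_endpoints (p0 p1 p2 p3 : Pt3) (h01 h12 h23 a01 a12 a23 s01 s12 s02) :
    (mk3 p0 p1 p2 p3 h01 h12 h23 a01 a12 a23 s01 s12 s02).endpoints = {p0, p3} := rfl

lemma mk3_bends (p0 p1 p2 p3 : Pt3) (h01 h12 h23 a01 a12 a23 s01 s12 s02) :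
    (mk3 p0 p1 p2 p3 h01 h12 h23 a01 a12 a23 s01 s12 s02).bends = 2 := rfl
open Set

/-- All data needed for the geometric construction: an index set `α` (the labels of the
`M₁` matching pairs), an injective labelling `ν` with values in `[1, N]`, and two
permutations `σ`, `τ` (the `M₂` and `M₃` matchings, transported to `α`), fixed-point
free and everywhere different from each other. -/
structure GeoSetup (α : Type*) where
  N : ℝ
  ν : α → ℝ
  σ : Equiv.Perm α
  τ : Equiv.Perm α
  hν1 : ∀ a, 1 ≤ ν a
  hν2 : ∀ a, ν a ≤ N
  hinj : Function.Injective ν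
  hσ : ∀ a, σ a ≠ a
  hτ : ∀ a, τ a ≠ a
  hστ : ∀ a, σ a ≠ τ a

namespace GeoSetup

variable {α : Type*} (S : GeoSetup α)

noncomputable def Z (a : α) : ℝ := if S.ν (S.σ a) < S.ν (S.τ a) then S.N + 1 + S.ν a else -(S.ν a)

noncomputable def W (a : α) : ℝ :=
  if S.ν (S.τ.symm a) < S.ν (S.σ.symm a) then S.N + 1 + S.ν a else -(S.ν a)

lemma Z_spec (a : α) : S.Z a = S.N + 1 + S.ν a ∨ S.Z a = -(S.ν a) := by
  unfold Z; split_ifs <;> [left; right] <;> rfl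

lemma W_spec (a : α) : S.W a = S.N + 1 + S.ν a ∨ S.W a = -(S.ν a) := by
  unfold W; split_ifs <;> [left; right] <;> rfl

/-- "outer" values: anything of the shape of `Z a` / `W a`. -/
lemma out_ne_ν {z : ℝ} {a : α} (hz : z = S.N + 1 + S.ν a ∨ z = -(S.ν a)) (b : α) :
    z ≠ S.ν b := by
  have h1 := S.hν1 a; have h2 := S.hν2 b; have h1b := S.hν1 b; have h2a := S.hν2 a
  rcases hz with rfl | rfl <;> intro h <;> linarith

lemma out_inj {z w : ℝ} {a b : α}
    (hz : z = S.N + 1 + S.ν a ∨ z = -(S.ν a)) (hw : w = S.N + 1 + S.ν b ∨ w = -(S.ν b))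
    (h : z = w) : a = b := by
  have h1 := S.hν1 a; have h1b := S.hν1 b; have h2 := S.hν2 a; have h2b := S.hν2 b
  rcases hz with rfl | rfl <;> rcases hw with rfl | rfl
  · exact S.hinj (by linarith)
  · exfalso; linarith
  · exfalso; linarith
  · exact S.hinj (by linarith)

lemma Z_ne_ν (a b : α) : S.Z a ≠ S.ν b := S.out_ne_ν (S.Z_spec a) b
lemma W_ne_ν (a b : α) : S.W a ≠ S.ν b := S.out_ne_ν (S.W_spec a) b
lemma Z_inj {a b : α} (h : S.Z a = S.Z b) : a = b := S.out_inj (S.Z_spec a) (S.Z_spec b) h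
lemma W_inj {a b : α} (h : S.W a = S.W b) : a = b := S.out_inj (S.W_spec a) (S.W_spec b) h

/-- If an outer value of index `b` lies in the interval spanned by `ν a` and an
outer value of index `a`, then `ν b ≤ ν a`. -/
lemma out_uIcc {z w : ℝ} {a b : α}
    (hz : z = S.N + 1 + S.ν a ∨ z = -(S.ν a)) (hw : w = S.N + 1 + S.ν b ∨ w = -(S.ν b))
    (h : w ∈ uIcc (S.ν a) z) : S.ν b ≤ S.ν a := by
  have h1 := S.hν1 a; have h1b := S.hν1 b; have h2 := S.hν2 a; have h2b := S.hν2 b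
  rw [Set.mem_uIcc] at h
  rcases hz with rfl | rfl <;> rcases hw with rfl | rfl <;>
    rcases h with ⟨u1, u2⟩ | ⟨u1, u2⟩ <;> linarith

/-- betweenness for the `Z` pillar : `ν (τ a)` lies between `ν (σ a)` and `Z a`. -/
lemma mem_Z (a : α) : S.ν (S.τ a) ∈ uIcc (S.ν (S.σ a)) (S.Z a) := by
  have h1 := S.hν1 a; have h2 := S.hν2 (S.τ a); have h3 := S.hν1 (S.τ a)
  rw [Set.mem_uIcc]; unfold Z; split_ifs with h
  · left; constructor <;> linarith
  · right
    have : S.ν (S.τ a) ≠ S.ν (S.σ a) := fun hc => S.hστ a (S.hinj hc.symm)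
    push_neg at h
    constructor <;> [linarith; exact lt_of_le_of_ne h this |>.le]

/-- betweenness for the `W` rail : `ν (σ⁻¹ a)` lies between `ν (τ⁻¹ a)` and `W a`. -/
lemma mem_W (a : α) : S.ν (S.σ.symm a) ∈ uIcc (S.ν (S.τ.symm a)) (S.W a) := by
  have h0 := S.hν1 a
  have h2 := S.hν2 (S.σ.symm a); have h3 := S.hν1 (S.σ.symm a)
  rw [Set.mem_uIcc]; unfold W; split_ifs with h
  · left; constructor <;> linarith
  · right
    have hne : S.ν (S.σ.symm a) ≠ S.ν (S.τ.symm a) := by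
      intro hc
      have := S.hinj hc
      exact S.hστ (S.σ.symm a) (by rw [Equiv.apply_symm_apply, this, Equiv.apply_symm_apply])
    push_neg at h
    constructor <;> [linarith; exact lt_of_le_of_ne h hne |>.le]

end GeoSetup

namespace GeoSetup
variable {α : Type*} (S : GeoSetup α)
open Set

-- the four corners of the `X`-string of index `a` and of the `Y`-string of index `a`
noncomputable def XP0 (a : α) : Pt3 := ![S.ν a, S.ν (S.τ.symm (S.σ a)), S.ν (S.σ a)]
noncomputable def XP1 (a : α) : Pt3 := ![S.ν a, S.ν a, S.ν (S.σ a)]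
noncomputable def XP2 (a : α) : Pt3 := ![S.ν a, S.ν a, S.Z a]
noncomputable def XP3 (a : α) : Pt3 := ![S.W a, S.ν a, S.Z a]
noncomputable def YQ0 (a : α) : Pt3 := ![S.ν (S.τ.symm a), S.ν (S.τ.symm a), S.ν a]
noncomputable def YQ1 (a : α) : Pt3 := ![S.W a, S.ν (S.τ.symm a), S.ν a]
noncomputable def YQ2 (a : α) : Pt3 := ![S.W a, S.ν (S.τ.symm a), S.Z a]
noncomputable def YQ3 (a : α) : Pt3 := ![S.W a, S.ν a, S.Z a]

lemma XP3_eq_YQ3 (a : α) : S.XP3 a = S.YQ3 a := rfl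

-- unfolding `∀ i ≠ a, …` over `Fin 3`
lemma forall_ne0 (P : Fin 3 → Prop) : (∀ i, i ≠ 0 → P i) ↔ P 1 ∧ P 2 := by
  constructor
  · exact fun h => ⟨h 1 (by decide), h 2 (by decide)⟩
  · rintro ⟨h1, h2⟩ i hi
    fin_cases i
    · exact absurd rfl hi
    · exact h1
    · exact h2

lemma forall_ne1 (P : Fin 3 → Prop) : (∀ i, i ≠ 1 → P i) ↔ P 0 ∧ P 2 := by
  constructor
  · exact fun h => ⟨h 0 (by decide), h 2 (by decide)⟩
  · rintro ⟨h1, h2⟩ i hi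
    fin_cases i
    · exact h1
    · exact absurd rfl hi
    · exact h2

lemma forall_ne2 (P : Fin 3 → Prop) : (∀ i, i ≠ 2 → P i) ↔ P 0 ∧ P 1 := by
  constructor
  · exact fun h => ⟨h 0 (by decide), h 1 (by decide)⟩
  · rintro ⟨h1, h2⟩ i hi
    fin_cases i
    · exact h1
    · exact h2
    · exact absurd rfl hi

-- membership in the six (closed) segments
lemma memA {a : α} {x : Pt3} :
    x ∈ segment ℝ (S.XP0 a) (S.XP1 a) ↔
      x 0 = S.ν a ∧ x 2 = S.ν (S.σ a) ∧ x 1 ∈ uIcc (S.ν (S.τ.symm (S.σ a))) (S.ν a) := by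
  rw [mem_seg_iff (a := 1) (by rw [forall_ne1]; constructor <;> rfl), forall_ne1]
  unfold XP0 XP1; simp only [Matrix.cons_val_zero, Matrix.cons_val_one, Matrix.head_cons,
    Matrix.cons_val_two, Matrix.tail_cons]
  tauto

lemma memB {a : α} {x : Pt3} :
    x ∈ segment ℝ (S.XP1 a) (S.XP2 a) ↔
      x 0 = S.ν a ∧ x 1 = S.ν a ∧ x 2 ∈ uIcc (S.ν (S.σ a)) (S.Z a) := by
  rw [mem_seg_iff (a := 2) (by rw [forall_ne2]; constructor <;> rfl), forall_ne2]
  unfold XP1 XP2; simp only [Matrix.cons_val_zero, Matrix.cons_val_one, Matrix.head_cons,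
    Matrix.cons_val_two, Matrix.tail_cons]
  tauto

lemma memC {a : α} {x : Pt3} :
    x ∈ segment ℝ (S.XP2 a) (S.XP3 a) ↔
      x 1 = S.ν a ∧ x 2 = S.Z a ∧ x 0 ∈ uIcc (S.ν a) (S.W a) := by
  rw [mem_seg_iff (a := 0) (by rw [forall_ne0]; constructor <;> rfl), forall_ne0]
  unfold XP2 XP3; simp only [Matrix.cons_val_zero, Matrix.cons_val_one, Matrix.head_cons,
    Matrix.cons_val_two, Matrix.tail_cons]
  tauto

lemma memD {a : α} {x : Pt3} :
    x ∈ segment ℝ (S.YQ0 a) (S.YQ1 a) ↔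
      x 1 = S.ν (S.τ.symm a) ∧ x 2 = S.ν a ∧ x 0 ∈ uIcc (S.ν (S.τ.symm a)) (S.W a) := by
  rw [mem_seg_iff (a := 0) (by rw [forall_ne0]; constructor <;> rfl), forall_ne0]
  unfold YQ0 YQ1; simp only [Matrix.cons_val_zero, Matrix.cons_val_one, Matrix.head_cons,
    Matrix.cons_val_two, Matrix.tail_cons]
  tauto

lemma memE {a : α} {x : Pt3} :
    x ∈ segment ℝ (S.YQ1 a) (S.YQ2 a) ↔
      x 0 = S.W a ∧ x 1 = S.ν (S.τ.symm a) ∧ x 2 ∈ uIcc (S.ν a) (S.Z a) := by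
  rw [mem_seg_iff (a := 2) (by rw [forall_ne2]; constructor <;> rfl), forall_ne2]
  unfold YQ1 YQ2; simp only [Matrix.cons_val_zero, Matrix.cons_val_one, Matrix.head_cons,
    Matrix.cons_val_two, Matrix.tail_cons]
  tauto

lemma memF {a : α} {x : Pt3} :
    x ∈ segment ℝ (S.YQ2 a) (S.YQ3 a) ↔
      x 0 = S.W a ∧ x 2 = S.Z a ∧ x 1 ∈ uIcc (S.ν (S.τ.symm a)) (S.ν a) := by
  rw [mem_seg_iff (a := 1) (by rw [forall_ne1]; constructor <;> rfl), forall_ne1]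
  unfold YQ2 YQ3; simp only [Matrix.cons_val_zero, Matrix.cons_val_one, Matrix.head_cons,
    Matrix.cons_val_two, Matrix.tail_cons]
  tauto

end GeoSetup

namespace GeoSetup
variable {α : Type*} (S : GeoSetup α)
open Set

lemma ne_of_coord {x y : Pt3} (i : Fin 3) (h : x i ≠ y i) : x ≠ y :=
  fun hc => h (by rw [hc])

lemma rho_ne (a : α) : S.τ.symm (S.σ a) ≠ a := by
  intro h
  refine S.hστ a ?_
  conv_lhs => rw [← Equiv.apply_symm_apply S.τ (S.σ a), h]

lemma nu_rho_ne (a : α) : S.ν (S.τ.symm (S.σ a)) ≠ S.ν a :=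
  fun h => S.rho_ne a (S.hinj h)

lemma nu_tsymm_ne (a : α) : S.ν (S.τ.symm a) ≠ S.ν a := by
  intro h
  have := S.hinj h
  exact S.hτ (S.τ.symm a) (by rw [Equiv.apply_symm_apply, this])

noncomputable def mkX (a : α) : AAString := by
  refine mk3 (S.XP0 a) (S.XP1 a) (S.XP2 a) (S.XP3 a)
    (ne_of_coord 1 ?_) (ne_of_coord 2 ?_) (ne_of_coord 0 ?_)
    ⟨1, ?_⟩ ⟨2, ?_⟩ ⟨0, ?_⟩ ?_ ?_ ?_
  · simpa [XP0, XP1] using S.nu_rho_ne a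
  · simpa [XP1, XP2] using (S.Z_ne_ν a (S.σ a)).symm
  · simpa [XP2, XP3] using (S.W_ne_ν a a).symm
  · intro j hj; fin_cases j <;> simp_all [XP0, XP1]
  · intro j hj; fin_cases j <;> simp_all [XP1, XP2]
  · intro j hj; fin_cases j <;> simp_all [XP2, XP3]
  · ext x
    simp only [mem_inter_iff, S.memA, S.memB, mem_singleton_iff]
    constructor
    · rintro ⟨⟨h0, h2, -⟩, -, h1, -⟩
      exact Pt3.ext' h0 h1 h2
    · rintro rfl
      refine ⟨⟨rfl, rfl, ?_⟩, rfl, rfl, ?_⟩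
      · exact right_mem_uIcc
      · exact left_mem_uIcc
  · ext x
    simp only [mem_inter_iff, S.memB, S.memC, mem_singleton_iff]
    constructor
    · rintro ⟨⟨h0, h1, -⟩, -, h2, -⟩
      exact Pt3.ext' h0 h1 h2
    · rintro rfl
      refine ⟨⟨rfl, rfl, ?_⟩, rfl, rfl, ?_⟩
      · exact right_mem_uIcc
      · exact left_mem_uIcc
  · ext x
    simp only [mem_inter_iff, S.memA, S.memC, mem_empty_iff_false, iff_false]
    rintro ⟨⟨-, h2, -⟩, -, h2', -⟩
    exact S.Z_ne_ν a (S.σ a) (h2'.symm.trans h2)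

noncomputable def mkY (a : α) : AAString := by
  refine mk3 (S.YQ0 a) (S.YQ1 a) (S.YQ2 a) (S.YQ3 a)
    (ne_of_coord 0 ?_) (ne_of_coord 2 ?_) (ne_of_coord 1 ?_)
    ⟨0, ?_⟩ ⟨2, ?_⟩ ⟨1, ?_⟩ ?_ ?_ ?_
  · simpa [YQ0, YQ1] using (S.W_ne_ν a (S.τ.symm a)).symm
  · simpa [YQ1, YQ2] using (S.Z_ne_ν a a).symm
  · simpa [YQ2, YQ3] using S.nu_tsymm_ne a
  · intro j hj; fin_cases j <;> simp_all [YQ0, YQ1]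
  · intro j hj; fin_cases j <;> simp_all [YQ1, YQ2]
  · intro j hj; fin_cases j <;> simp_all [YQ2, YQ3]
  · ext x
    simp only [mem_inter_iff, S.memD, S.memE, mem_singleton_iff]
    constructor
    · rintro ⟨⟨h1, h2, -⟩, h0, -, -⟩
      exact Pt3.ext' h0 h1 h2
    · rintro rfl
      refine ⟨⟨rfl, rfl, ?_⟩, rfl, rfl, ?_⟩
      · exact right_mem_uIcc
      · exact left_mem_uIcc
  · ext x
    simp only [mem_inter_iff, S.memE, S.memF, mem_singleton_iff]
    constructor
    · rintro ⟨⟨h0, h1, -⟩, -, h2, -⟩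
      exact Pt3.ext' h0 h1 h2
    · rintro rfl
      refine ⟨⟨rfl, rfl, ?_⟩, rfl, rfl, ?_⟩
      · exact right_mem_uIcc
      · exact left_mem_uIcc
  · ext x
    simp only [mem_inter_iff, S.memD, S.memF, mem_empty_iff_false, iff_false]
    rintro ⟨⟨-, h2, -⟩, -, h2', -⟩
    exact S.Z_ne_ν a a (h2'.symm.trans h2)

lemma memX {a : α} {x : Pt3} :
    x ∈ (S.mkX a).carrier ↔
      (x 0 = S.ν a ∧ x 2 = S.ν (S.σ a) ∧ x 1 ∈ uIcc (S.ν (S.τ.symm (S.σ a))) (S.ν a)) ∨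
      (x 0 = S.ν a ∧ x 1 = S.ν a ∧ x 2 ∈ uIcc (S.ν (S.σ a)) (S.Z a)) ∨
      (x 1 = S.ν a ∧ x 2 = S.Z a ∧ x 0 ∈ uIcc (S.ν a) (S.W a)) := by
  rw [show (S.mkX a).carrier = _ from mk3_carrier _ _ _ _ _ _ _ _ _ _ _ _ _]
  simp only [mem_union, S.memA, S.memB, S.memC]
  tauto

lemma memY {a : α} {x : Pt3} :
    x ∈ (S.mkY a).carrier ↔
      (x 1 = S.ν (S.τ.symm a) ∧ x 2 = S.ν a ∧ x 0 ∈ uIcc (S.ν (S.τ.symm a)) (S.W a)) ∨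
      (x 0 = S.W a ∧ x 1 = S.ν (S.τ.symm a) ∧ x 2 ∈ uIcc (S.ν a) (S.Z a)) ∨
      (x 0 = S.W a ∧ x 2 = S.Z a ∧ x 1 ∈ uIcc (S.ν (S.τ.symm a)) (S.ν a)) := by
  rw [show (S.mkY a).carrier = _ from mk3_carrier _ _ _ _ _ _ _ _ _ _ _ _ _]
  simp only [mem_union, S.memD, S.memE, S.memF]
  tauto

lemma endpointsX (a : α) : (S.mkX a).endpoints = {S.XP0 a, S.XP3 a} := rfl
lemma endpointsY (a : α) : (S.mkY a).endpoints = {S.YQ0 a, S.YQ3 a} := rfl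
lemma bendsX (a : α) : (S.mkX a).bends = 2 := rfl
lemma bendsY (a : α) : (S.mkY a).bends = 2 := rfl

end GeoSetup

namespace GeoSetup
variable {α : Type*} (S : GeoSetup α)
open Set

lemma XX_disj {a b : α} (hab : a ≠ b) :
    (S.mkX a).carrier ∩ (S.mkX b).carrier = ∅ := by
  ext x
  simp only [mem_inter_iff, S.memX, mem_empty_iff_false, iff_false]
  rintro ⟨⟨u0, u2, -⟩ | ⟨u0, u1, -⟩ | ⟨u1, u2, -⟩, ⟨v0, v2, -⟩ | ⟨v0, v1, -⟩ | ⟨v1, v2, -⟩⟩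
  · exact hab (S.hinj (u0.symm.trans v0))
  · exact hab (S.hinj (u0.symm.trans v0))
  · exact S.Z_ne_ν b (S.σ a) (v2.symm.trans u2)
  · exact hab (S.hinj (u0.symm.trans v0))
  · exact hab (S.hinj (u0.symm.trans v0))
  · exact hab (S.hinj (u1.symm.trans v1))
  · exact S.Z_ne_ν a (S.σ b) (u2.symm.trans v2)
  · exact hab (S.hinj (u1.symm.trans v1))
  · exact hab (S.Z_inj (u2.symm.trans v2))

lemma YY_disj {a b : α} (hab : a ≠ b) :
    (S.mkY a).carrier ∩ (S.mkY b).carrier = ∅ := by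
  ext x
  simp only [mem_inter_iff, S.memY, mem_empty_iff_false, iff_false]
  rintro ⟨⟨u1, u2, -⟩ | ⟨u0, u1, -⟩ | ⟨u0, u2, -⟩, ⟨v1, v2, -⟩ | ⟨v0, v1, -⟩ | ⟨v0, v2, -⟩⟩
  · exact hab (S.hinj (u2.symm.trans v2))
  · exact hab (S.τ.symm.injective (S.hinj (u1.symm.trans v1)))
  · exact S.Z_ne_ν b a (v2.symm.trans u2)
  · exact hab (S.τ.symm.injective (S.hinj (u1.symm.trans v1)))
  · exact hab (S.W_inj (u0.symm.trans v0))
  · exact hab (S.W_inj (u0.symm.trans v0))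
  · exact S.Z_ne_ν a b (u2.symm.trans v2)
  · exact hab (S.W_inj (u0.symm.trans v0))
  · exact hab (S.Z_inj (u2.symm.trans v2))

/-- master analysis of the intersection of an `X`-string and a `Y`-string. -/
lemma XY_sub {a j : α} {x : Pt3}
    (hx : x ∈ (S.mkX a).carrier) (hy : x ∈ (S.mkY j).carrier) :
    (j = a ∧ x = S.XP3 a) ∨ (j = S.σ a ∧ x = S.XP0 a) ∨ (j = S.τ a ∧ x = S.YQ0 j) := by
  rw [S.memX] at hx
  rw [S.memY] at hy
  rcases hx with ⟨u0, u2, -⟩ | ⟨u0, u1, u2m⟩ | ⟨u1, u2, u0m⟩ <;>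
    rcases hy with ⟨v1, v2, v0m⟩ | ⟨v0, v1, v2m⟩ | ⟨v0, v2, v1m⟩
  -- (A,D)
  · have hj : j = S.σ a := (S.hinj (u2.symm.trans v2)).symm
    subst hj
    exact Or.inr (Or.inl ⟨rfl, Pt3.ext' u0 v1 u2⟩)
  -- (A,E)
  · exact absurd (v0.symm.trans u0) (S.W_ne_ν j a)
  -- (A,F)
  · exact absurd (v2.symm.trans u2) (S.Z_ne_ν j (S.σ a))
  -- (B,D)
  · have ha : a = S.τ.symm j := S.hinj (u1.symm.trans v1)
    have hj : j = S.τ a := by rw [ha, Equiv.apply_symm_apply]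
    subst hj
    refine Or.inr (Or.inr ⟨rfl, ?_⟩)
    have e : S.τ.symm (S.τ a) = a := Equiv.symm_apply_apply _ _
    simp only [YQ0, e]
    exact Pt3.ext' u0 u1 v2
  -- (B,E)
  · exact absurd (v0.symm.trans u0) (S.W_ne_ν j a)
  -- (B,F)
  · exact absurd (v0.symm.trans u0) (S.W_ne_ν j a)
  -- (C,D)
  · exact absurd (u2.symm.trans v2) (S.Z_ne_ν a j)
  -- (C,E)
  · exfalso
    have ha : a = S.τ.symm j := S.hinj (u1.symm.trans v1)
    have hj : j = S.τ a := by rw [ha, Equiv.apply_symm_apply]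
    have h1 : S.ν j ≤ S.ν a := by
      refine S.out_uIcc (S.W_spec a) (S.W_spec j) ?_
      rw [← v0]; exact u0m
    have h2 : S.ν a ≤ S.ν j := by
      refine S.out_uIcc (S.Z_spec j) (S.Z_spec a) ?_
      rw [← u2]; exact v2m
    have haj : a = j := S.hinj (le_antisymm h2 h1)
    exact S.hτ a ((haj.trans hj).symm)
  -- (C,F)
  · have hj : j = a := S.Z_inj (v2.symm.trans u2)
    subst hj
    exact Or.inl ⟨rfl, Pt3.ext' v0 u1 u2⟩

end GeoSetup

namespace GeoSetup
variable {α : Type*} (S : GeoSetup α)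
open Set

lemma XY_inter_M1 (a : α) :
    (S.mkX a).carrier ∩ (S.mkY a).carrier = {S.XP3 a} := by
  apply Set.Subset.antisymm
  · rintro x ⟨hx, hy⟩
    rcases S.XY_sub hx hy with ⟨-, rfl⟩ | ⟨hj, -⟩ | ⟨hj, -⟩
    · exact mem_singleton _
    · exact absurd hj.symm (S.hσ a)
    · exact absurd hj.symm (S.hτ a)
  · rintro x (rfl : x = S.XP3 a)
    constructor
    · rw [S.memX]
      exact Or.inr (Or.inr ⟨rfl, rfl, right_mem_uIcc⟩)
    · rw [S.memY]
      exact Or.inr (Or.inr ⟨rfl, rfl, right_mem_uIcc⟩)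

lemma XY_inter_M2 (a : α) :
    (S.mkX a).carrier ∩ (S.mkY (S.σ a)).carrier = {S.XP0 a} := by
  apply Set.Subset.antisymm
  · rintro x ⟨hx, hy⟩
    rcases S.XY_sub hx hy with ⟨hj, -⟩ | ⟨-, rfl⟩ | ⟨hj, -⟩
    · exact absurd hj (S.hσ a)
    · exact mem_singleton _
    · exact absurd hj (S.hστ a)
  · rintro x (rfl : x = S.XP0 a)
    constructor
    · rw [S.memX]
      exact Or.inl ⟨rfl, rfl, left_mem_uIcc⟩
    · rw [S.memY]
      refine Or.inl ⟨rfl, rfl, ?_⟩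
      have h := S.mem_W (S.σ a)
      rwa [Equiv.symm_apply_apply] at h

lemma XY_inter_M3 (a : α) :
    (S.mkX a).carrier ∩ (S.mkY (S.τ a)).carrier = {S.YQ0 (S.τ a)} := by
  apply Set.Subset.antisymm
  · rintro x ⟨hx, hy⟩
    rcases S.XY_sub hx hy with ⟨hj, -⟩ | ⟨hj, -⟩ | ⟨-, rfl⟩
    · exact absurd hj (S.hτ a)
    · exact absurd hj.symm (S.hστ a)
    · exact mem_singleton _
  · rintro x (rfl : x = S.YQ0 (S.τ a))
    have e : S.τ.symm (S.τ a) = a := Equiv.symm_apply_apply _ _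
    constructor
    · rw [S.memX]
      refine Or.inr (Or.inl ⟨?_, ?_, ?_⟩) <;>
        simp only [YQ0, e, Matrix.cons_val_zero, Matrix.cons_val_one, Matrix.head_cons,
          Matrix.cons_val_two, Matrix.tail_cons]
      exact S.mem_Z a
    · rw [S.memY]
      exact Or.inl ⟨rfl, rfl, left_mem_uIcc⟩

lemma XY_inter_none {a j : α} (h1 : j ≠ a) (h2 : j ≠ S.σ a) (h3 : j ≠ S.τ a) :
    (S.mkX a).carrier ∩ (S.mkY j).carrier = ∅ := by
  rw [Set.eq_empty_iff_forall_notMem]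
  rintro x ⟨hx, hy⟩
  rcases S.XY_sub hx hy with ⟨hj, -⟩ | ⟨hj, -⟩ | ⟨hj, -⟩
  exacts [h1 hj, h2 hj, h3 hj]

end GeoSetup
open Finset

section HallRegular

variable {β γ : Type*} [Fintype β] [Fintype γ] [DecidableEq β] [DecidableEq γ]

lemma bip_above_card (t : β → Finset γ) (s : Finset β) {a : β} (ha : a ∈ s) :
    ((s.biUnion t).bipartiteAbove (fun a b => b ∈ t a) a).card = (t a).card := by
  congr 1
  ext c
  simp only [Finset.mem_bipartiteAbove, Finset.mem_biUnion]
  exact ⟨fun h => h.2, fun h => ⟨⟨a, ha, h⟩, h⟩⟩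

lemma hall_regular (t : β → Finset γ) (d : ℕ) (hd : 0 < d)
    (h1 : ∀ b, (t b).card = d)
    (h2 : ∀ c : γ, (Finset.univ.filter (fun b => c ∈ t b)).card = d) :
    ∃ f : β → γ, Function.Bijective f ∧ ∀ b, f b ∈ t b := by
  have hall : ∀ s : Finset β, s.card ≤ (s.biUnion t).card := by
    intro s
    have key := Finset.card_nsmul_le_card_nsmul (s := s) (t := s.biUnion t)
      (fun a b => b ∈ t a) (m := (d : ℕ)) (n := (d : ℕ))
      (fun a ha => by rw [bip_above_card t s ha, h1]; simp)
      (fun c _ => by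
        refine le_trans (le_trans (Finset.card_le_card ?_) (le_of_eq (h2 c))) (by simp)
        intro a ha
        simp only [Finset.mem_bipartiteBelow] at ha
        simp [ha.2])
    simpa [smul_eq_mul] using Nat.le_of_mul_le_mul_right (by simpa [smul_eq_mul] using key) hd
  obtain ⟨f, finj, hf⟩ := (Finset.all_card_le_biUnion_card_iff_exists_injective t).mp hall
  have habove : ∀ a : β, ((univ : Finset γ).bipartiteAbove (fun a b => b ∈ t a) a) = t a := by
    intro a; ext c; simp [Finset.mem_bipartiteAbove]
  have hbelow : ∀ c : γ, ((univ : Finset β).bipartiteBelow (fun a b => b ∈ t a) c)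
      = univ.filter (fun b => c ∈ t b) := by
    intro c; ext a; simp [Finset.mem_bipartiteBelow]
  have hcard : Fintype.card β = Fintype.card γ := by
    have k1 := Finset.card_nsmul_le_card_nsmul (s := (univ : Finset β)) (t := (univ : Finset γ))
      (fun a b => b ∈ t a) (m := (d : ℕ)) (n := (d : ℕ))
      (fun a _ => by rw [habove, h1]; simp) (fun c _ => by rw [hbelow, h2]; simp)
    have k2 := Finset.card_nsmul_le_card_nsmul' (s := (univ : Finset β)) (t := (univ : Finset γ))
      (fun a b => b ∈ t a) (m := (d : ℕ)) (n := (d : ℕ))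
      (fun c _ => by rw [hbelow, h2]; simp) (fun a _ => by rw [habove, h1]; simp)
    have e1 : Fintype.card β * d ≤ Fintype.card γ * d := by simpa [smul_eq_mul] using k1
    have e2 : Fintype.card γ * d ≤ Fintype.card β * d := by simpa [smul_eq_mul] using k2
    exact Nat.le_antisymm (Nat.le_of_mul_le_mul_right e1 hd) (Nat.le_of_mul_le_mul_right e2 hd)
  exact ⟨f, (Fintype.bijective_iff_injective_and_card f).mpr ⟨finj, hcard⟩, hf⟩

/-- From a `3`-regular bipartite incidence structure, extract three bijections
whose graphs partition the incidences. -/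
lemma three_matchings (t : β → Finset γ)
    (h1 : ∀ b, (t b).card = 3)
    (h2 : ∀ c : γ, (Finset.univ.filter (fun b => c ∈ t b)).card = 3) :
    ∃ f g h : β → γ, Function.Bijective f ∧ Function.Bijective g ∧ Function.Bijective h ∧
      (∀ b, t b = {f b, g b, h b}) ∧ (∀ b, f b ≠ g b) ∧ (∀ b, f b ≠ h b) ∧ (∀ b, g b ≠ h b) := by
  obtain ⟨f, fbij, hf⟩ := hall_regular t 3 (by norm_num) h1 h2
  set F := Equiv.ofBijective f fbij with hF
  set t2 : β → Finset γ := fun b => (t b).erase (f b) with ht2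
  have h1' : ∀ b, (t2 b).card = 2 := fun b => by
    simp only [ht2]; rw [Finset.card_erase_of_mem (hf b), h1]
  have hmem2 : ∀ {c : γ} {b : β}, c ∈ t2 b ↔ c ∈ t b ∧ b ≠ F.symm c := by
    intro c b
    simp only [ht2, Finset.mem_erase]
    constructor
    · rintro ⟨hne, hm⟩
      refine ⟨hm, fun hb => hne ?_⟩
      rw [hb]
      exact (F.apply_symm_apply c).symm
    · rintro ⟨hm, hb⟩
      refine ⟨fun hc => hb ?_, hm⟩
      rw [hc]
      exact (F.symm_apply_apply b).symm
  have h2' : ∀ c : γ, (Finset.univ.filter (fun b => c ∈ t2 b)).card = 2 := by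
    intro c
    have he : Finset.univ.filter (fun b => c ∈ t2 b)
        = (Finset.univ.filter (fun b => c ∈ t b)).erase (F.symm c) := by
      ext b
      simp only [Finset.mem_filter, Finset.mem_erase, Finset.mem_univ, true_and, hmem2]
      tauto
    rw [he, Finset.card_erase_of_mem, h2]
    simp only [Finset.mem_filter, Finset.mem_univ, true_and]
    have h3 := hf (F.symm c)
    have h4 : f (F.symm c) = c := F.apply_symm_apply c
    rw [h4] at h3
    exact h3
  obtain ⟨g, gbij, hg⟩ := hall_regular t2 2 (by norm_num) h1' h2'
  set Gq := Equiv.ofBijective g gbij with hG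
  set t3 : β → Finset γ := fun b => (t2 b).erase (g b) with ht3
  have h1'' : ∀ b, (t3 b).card = 1 := fun b => by
    simp only [ht3]; rw [Finset.card_erase_of_mem (hg b), h1']
  have hmem3 : ∀ {c : γ} {b : β}, c ∈ t3 b ↔ c ∈ t2 b ∧ b ≠ Gq.symm c := by
    intro c b
    simp only [ht3, Finset.mem_erase]
    constructor
    · rintro ⟨hne, hm⟩
      refine ⟨hm, fun hb => hne ?_⟩
      rw [hb]
      exact (Gq.apply_symm_apply c).symm
    · rintro ⟨hm, hb⟩
      refine ⟨fun hc => hb ?_, hm⟩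
      rw [hc]
      exact (Gq.symm_apply_apply b).symm
  have h2'' : ∀ c : γ, (Finset.univ.filter (fun b => c ∈ t3 b)).card = 1 := by
    intro c
    have he : Finset.univ.filter (fun b => c ∈ t3 b)
        = (Finset.univ.filter (fun b => c ∈ t2 b)).erase (Gq.symm c) := by
      ext b
      simp only [Finset.mem_filter, Finset.mem_erase, Finset.mem_univ, true_and, hmem3]
      tauto
    rw [he, Finset.card_erase_of_mem, h2']
    simp only [Finset.mem_filter, Finset.mem_univ, true_and]
    have h3 := hg (Gq.symm c)
    have h4 : g (Gq.symm c) = c := Gq.apply_symm_apply c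
    rw [h4] at h3
    exact h3
  obtain ⟨h, hbij, hh⟩ := hall_regular t3 1 (by norm_num) h1'' h2''
  have hgf : ∀ b, g b ≠ f b := by
    intro b hc
    have h5 := hg b
    simp only [ht2, Finset.mem_erase] at h5
    exact h5.1 hc
  have hhg : ∀ b, h b ≠ g b := by
    intro b hc
    have h5 := hh b
    simp only [ht3, Finset.mem_erase] at h5
    exact h5.1 hc
  have hh2 : ∀ b, h b ∈ t2 b := fun b => Finset.erase_subset _ _ (hh b)
  have hhf : ∀ b, h b ≠ f b := by
    intro b hc
    have h5 := hh2 b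
    simp only [ht2, Finset.mem_erase] at h5
    exact h5.1 hc
  have hg1 : ∀ b, g b ∈ t b := fun b => Finset.erase_subset _ _ (hg b)
  have hh1 : ∀ b, h b ∈ t b := fun b => Finset.erase_subset _ _ (hh2 b)
  refine ⟨f, g, h, fbij, gbij, hbij, ?_, fun b => (hgf b).symm, fun b => (hhf b).symm,
    fun b => (hhg b).symm⟩
  intro b
  have hc3 : ({f b, g b, h b} : Finset γ).card = 3 := by
    rw [Finset.card_insert_of_notMem (by
      simp only [Finset.mem_insert, Finset.mem_singleton]
      push_neg
      exact ⟨(hgf b).symm, (hhf b).symm⟩)]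
    rw [Finset.card_insert_of_notMem (by
      simp only [Finset.mem_singleton]
      exact (hhg b).symm)]
    rw [Finset.card_singleton]
  refine (Finset.eq_of_subset_of_card_le ?_ ?_).symm
  · intro c hc
    simp only [Finset.mem_insert, Finset.mem_singleton] at hc
    rcases hc with rfl | rfl | rfl
    exacts [hf b, hg1 b, hh1 b]
  · rw [h1 b, hc3]

end HallRegular
/-- Every finite 3-regular bipartite simple graph admits a string contact
representation in ℝ³ of complexity at most 2 (every string is a `B₂`-string). -/
theorem cubic_bipartite_stringContactRep {V : Type*} [Fintype V] [DecidableEq V]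
    (G : SimpleGraph V) [DecidableRel G.Adj]
    (hreg : G.IsRegularOfDegree 3) (hbip : G.Colorable 2) :
    ∃ Ψ : V → AAString, IsStringContactRep G Ψ ∧ ∀ v : V, (Ψ v).bends ≤ 2 := by
  classical
  obtain ⟨c⟩ := hbip
  -- the two sides of the bipartition
  let β := {v : V // c v = 0}
  let γ := {v : V // ¬ c v = 0}
  have fin2 : ∀ x y : Fin 2, x ≠ y → y ≠ 0 → x = 0 := by decide
  -- neighbourhoods, as a `β`-indexed family of finsets of `γ`
  let t : β → Finset γ := fun b => (G.neighborFinset b.1).subtype (fun v => ¬ c v = 0)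
  have hmem_t : ∀ (b : β) (w : γ), w ∈ t b ↔ G.Adj b.1 w.1 := by
    intro b w
    show w ∈ Finset.subtype _ _ ↔ _
    rw [Finset.mem_subtype, SimpleGraph.mem_neighborFinset]
  have h1 : ∀ b : β, (t b).card = 3 := by
    intro b
    rw [Finset.card_subtype, Finset.filter_true_of_mem, SimpleGraph.card_neighborFinset_eq_degree,
      hreg b.1]
    intro v hv
    rw [SimpleGraph.mem_neighborFinset] at hv
    exact fun h0 => (c.valid hv) (b.2.trans h0.symm)
  have h2 : ∀ w : γ, (Finset.univ.filter (fun b => w ∈ t b)).card = 3 := by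
    intro w
    have := hreg w.1
    rw [← hreg w.1, ← SimpleGraph.card_neighborFinset_eq_degree]
    refine Finset.card_bij' (fun b _ => (b : V)) (fun v hv => ⟨v, ?_⟩) ?_ ?_ ?_ ?_
    · rw [SimpleGraph.mem_neighborFinset] at hv
      exact fin2 (c v) (c w.1) (c.valid hv.symm) w.2
    · intro b hb
      simp only [Finset.mem_filter, hmem_t] at hb
      rw [SimpleGraph.mem_neighborFinset]
      exact hb.2.symm
    · intro v hv
      rw [SimpleGraph.mem_neighborFinset] at hv
      simp only [Finset.mem_filter, Finset.mem_univ, true_and, hmem_t]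
      exact hv.symm
    · intro b _; rfl
    · intro v _; rfl
  obtain ⟨f, g, h, fbij, gbij, hbij, htab, hfg, hfh, hgh⟩ := three_matchings t h1 h2
  let F : β ≃ γ := Equiv.ofBijective f fbij
  let Gq : β ≃ γ := Equiv.ofBijective g gbij
  let Hq : β ≃ γ := Equiv.ofBijective h hbij
  let σ : Equiv.Perm β := Gq.trans F.symm
  let τ : Equiv.Perm β := Hq.trans F.symm
  have hσττ : ∀ b : β, σ b = F.symm (g b) := fun _ => rfl
  have hτττ : ∀ b : β, τ b = F.symm (h b) := fun _ => rfl
  -- the labelling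
  let n := Fintype.card β
  let e : β ≃ Fin n := Fintype.equivFin β
  let ν : β → ℝ := fun b => ((e b : ℕ) : ℝ) + 1
  have hν1 : ∀ b, 1 ≤ ν b := by
    intro b
    have hnn : (0:ℝ) ≤ ((e b : ℕ) : ℝ) := Nat.cast_nonneg _
    simp only [ν]
    linarith
  have hν2 : ∀ b, ν b ≤ (n : ℝ) := by
    intro b
    have := (e b).isLt
    simp only [ν]
    exact_mod_cast Nat.succ_le_of_lt this
  have hinj : Function.Injective ν := by
    intro x y hxy
    simp only [ν] at hxy
    have h' : ((e x : ℕ) : ℝ) = ((e y : ℕ) : ℝ) := by linarith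
    have : (e x : ℕ) = (e y : ℕ) := by exact_mod_cast h'
    exact e.injective (Fin.ext this)
  have hσ : ∀ b, σ b ≠ b := by
    intro b hc
    have : g b = f b := by
      have := congrArg F hc
      rw [hσττ, F.apply_symm_apply] at this
      exact this
    exact hfg b this.symm
  have hτ : ∀ b, τ b ≠ b := by
    intro b hc
    have : h b = f b := by
      have := congrArg F hc
      rw [hτττ, F.apply_symm_apply] at this
      exact this
    exact hfh b this.symm
  have hστ : ∀ b, σ b ≠ τ b := by
    intro b hc
    have : g b = h b := by
      have := congrArg F hc
      rw [hσττ, hτττ, F.apply_symm_apply, F.apply_symm_apply] at this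
      exact this
    exact hgh b this
  let S : GeoSetup β := ⟨(n : ℝ), ν, σ, τ, hν1, hν2, hinj, hσ, hτ, hστ⟩
  -- the strings
  let Ψ : V → AAString := fun v =>
    if hv : c v = 0 then S.mkX ⟨v, hv⟩ else S.mkY (F.symm ⟨v, hv⟩)
  have hΨ0 : ∀ (v : V) (hv : c v = 0), Ψ v = S.mkX ⟨v, hv⟩ := fun v hv => dif_pos hv
  have hΨ1 : ∀ (v : V) (hv : ¬ c v = 0), Ψ v = S.mkY (F.symm ⟨v, hv⟩) := fun v hv => dif_neg hv
  -- adjacency characterisation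
  have hAdj : ∀ (b : β) (w : γ),
      G.Adj b.1 w.1 ↔ (F.symm w = b ∨ F.symm w = σ b ∨ F.symm w = τ b) := by
    intro b w
    rw [← hmem_t, htab b]
    simp only [Finset.mem_insert, Finset.mem_singleton]
    constructor
    · rintro (rfl | rfl | rfl)
      · exact Or.inl (F.symm_apply_apply b)
      · exact Or.inr (Or.inl rfl)
      · exact Or.inr (Or.inr rfl)
    · rintro (hh | hh | hh)
      · left
        have := congrArg F hh
        rw [F.apply_symm_apply] at this
        exact this
      · right; left
        have := congrArg F hh
        rw [F.apply_symm_apply, hσττ, F.apply_symm_apply] at this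
        exact this
      · right; right
        have := congrArg F hh
        rw [F.apply_symm_apply, hτττ, F.apply_symm_apply] at this
        exact this
  -- same-colour strings are disjoint
  have samecol : ∀ u v : V, u ≠ v → c u = c v →
      (Ψ u).carrier ∩ (Ψ v).carrier = ∅ := by
    intro u v huv hc
    by_cases hu : c u = 0
    · have hv : c v = 0 := hc ▸ hu
      rw [hΨ0 u hu, hΨ0 v hv]
      exact S.XX_disj (fun hb => huv (congrArg Subtype.val hb))
    · have hv : ¬ c v = 0 := fun h0 => hu (hc.trans h0)
      rw [hΨ1 u hu, hΨ1 v hv]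
      refine S.YY_disj (fun hb => huv ?_)
      have := congrArg F hb
      rw [F.apply_symm_apply, F.apply_symm_apply] at this
      exact congrArg Subtype.val this
  -- mixed-colour pairs
  have mainXY : ∀ (b : β) (w : γ),
      ((S.mkX b).carrier ∩ (S.mkY (F.symm w)).carrier = ∅ ∧ ¬ G.Adj b.1 w.1) ∨
      (∃ p, (S.mkX b).carrier ∩ (S.mkY (F.symm w)).carrier = {p} ∧
        (p ∈ (S.mkX b).endpoints ∨ p ∈ (S.mkY (F.symm w)).endpoints) ∧ G.Adj b.1 w.1) := by
    intro b w
    rcases eq_or_ne (F.symm w) b with hj | hj1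
    · right
      refine ⟨S.XP3 b, by rw [hj, S.XY_inter_M1], Or.inl ?_, (hAdj b w).mpr (Or.inl hj)⟩
      rw [S.endpointsX]
      exact Or.inr rfl
    · rcases eq_or_ne (F.symm w) (σ b) with hj | hj2
      · right
        refine ⟨S.XP0 b, by rw [hj]; exact S.XY_inter_M2 b, Or.inl ?_,
          (hAdj b w).mpr (Or.inr (Or.inl hj))⟩
        rw [S.endpointsX]
        exact Or.inl rfl
      · rcases eq_or_ne (F.symm w) (τ b) with hj | hj3
        · right
          refine ⟨S.YQ0 (τ b), by rw [hj]; exact S.XY_inter_M3 b, Or.inr ?_,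
            (hAdj b w).mpr (Or.inr (Or.inr hj))⟩
          rw [hj, S.endpointsY]
          exact Or.inl rfl
        · left
          refine ⟨S.XY_inter_none hj1 hj2 hj3, ?_⟩
          rw [hAdj b w]
          push_neg
          exact ⟨hj1, hj2, hj3⟩
  -- the master dichotomy
  have main : ∀ u v : V, u ≠ v →
      ((Ψ u).carrier ∩ (Ψ v).carrier = ∅ ∧ ¬ G.Adj u v) ∨
      (∃ p, (Ψ u).carrier ∩ (Ψ v).carrier = {p} ∧
        (p ∈ (Ψ u).endpoints ∨ p ∈ (Ψ v).endpoints) ∧ G.Adj u v) := by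
    intro u v huv
    by_cases hu : c u = 0 <;> by_cases hv : c v = 0
    · left
      refine ⟨samecol u v huv (hu.trans hv.symm), fun hadj => c.valid hadj (hu.trans hv.symm)⟩
    · rw [hΨ0 u hu, hΨ1 v hv]
      exact mainXY ⟨u, hu⟩ ⟨v, hv⟩
    · rw [hΨ1 u hu, hΨ0 v hv, Set.inter_comm]
      rcases mainXY ⟨v, hv⟩ ⟨u, hu⟩ with ⟨he, hna⟩ | ⟨p, hp, hend, hadj⟩
      · exact Or.inl ⟨he, fun hadj => hna (G.adj_symm hadj)⟩
      · exact Or.inr ⟨p, hp, hend.symm, G.adj_symm hadj⟩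
    · left
      have hcu : c u = 1 := by omega
      have hcv : c v = 1 := by omega
      refine ⟨samecol u v huv (hcu.trans hcv.symm), fun hadj => c.valid hadj (hcu.trans hcv.symm)⟩
  refine ⟨Ψ, ⟨?_, ?_, ?_⟩, ?_⟩
  · -- contacts at endpoints
    intro u v huv p hp
    rcases main u v huv with ⟨he, -⟩ | ⟨q, hq, hend, -⟩
    · rw [he] at hp
      exact absurd hp (Set.notMem_empty p)
    · rw [hq] at hp
      rw [hp]
      exact hend
  · -- no triple points
    intro u v w huv huw hvw p hp
    obtain ⟨pu, pv, pw⟩ := hp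
    have tri : c u = c v ∨ c u = c w ∨ c v = c w := by omega
    rcases tri with hcc | hcc | hcc
    · have := samecol u v huv hcc
      rw [Set.eq_empty_iff_forall_notMem] at this
      exact this p ⟨pu, pv⟩
    · have := samecol u w huw hcc
      rw [Set.eq_empty_iff_forall_notMem] at this
      exact this p ⟨pu, pw⟩
    · have := samecol v w hvw hcc
      rw [Set.eq_empty_iff_forall_notMem] at this
      exact this p ⟨pv, pw⟩
  · -- intersection iff adjacency
    intro u v huv
    rcases main u v huv with ⟨he, hna⟩ | ⟨q, hq, -, hadj⟩
    · rw [he]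
      simp [hna]
    · rw [hq]
      simp [hadj]
  · -- bends
    intro v
    by_cases hv : c v = 0
    · rw [hΨ0 v hv, S.bendsX]
    · rw [hΨ1 v hv, S.bendsY]
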